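/- Let μ₁ and μ₂ be probability measures on (S₁,𝒮₁) and (S₂,𝒮₂), let (X₁ⁿ)_{n≤N} be i.i.d. from μ₁ and (X₂ⁿ)_{n≤N} i.i.d. from μ₂, with the two collections independent, and let μ_k^N denote the respective empirical measures. Then there is a constant C, independent of N and φ, such that E[((μ₁^N − μ₁) × (μ₂^N − μ₂)(φ))²]^{1/2} ≤ C‖φ‖/N for all N > 0 and all bounded measurable φ on S₁ × S₂. -/

import Mathlib

open MeasureTheory ProbabilityTheory

lemma aux_pi_prod {S : Type*} [MeasurableSpace S] (μ : Measure S) [IsProbabilityMeasure μ] {N : ℕ}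
    (h : Fin N → S → ℝ) :
    ∫ x : Fin N → S, ∏ k, h k (x k) ∂(Measure.pi fun _ => μ) = ∏ k, ∫ a, h k a ∂μ := by
  letI : MeasureSpace S := ⟨μ⟩
  haveI : SigmaFinite (volume : Measure S) := inferInstanceAs (SigmaFinite μ)
  have := MeasureTheory.integral_fintype_prod_eq_prod (𝕜 := ℝ) (fun k => h k) (μ := fun _ : Fin N => μ)
  simpa [volume_pi] using this

lemma aux_pi_two {S : Type*} [MeasurableSpace S] (μ : Measure S) [IsProbabilityMeasure μ] {N : ℕ}
    {i i' : Fin N} (hii : i ≠ i') (f g : S → ℝ) :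
    ∫ x : Fin N → S, f (x i) * g (x i') ∂(Measure.pi fun _ => μ)
      = (∫ a, f a ∂μ) * ∫ a, g a ∂μ := by
  set h : Fin N → S → ℝ := fun k => if k = i then f else if k = i' then g else fun _ => (1:ℝ)
    with hh
  have e1 : ∀ x : Fin N → S, (∏ k, h k (x k)) = f (x i) * g (x i') := by
    intro x
    rw [← Finset.mul_prod_erase Finset.univ _ (Finset.mem_univ i),
        ← Finset.mul_prod_erase _ _
          (Finset.mem_erase.mpr ⟨Ne.symm hii, Finset.mem_univ i'⟩)]
    rw [Finset.prod_eq_one (fun k hk => by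
      have h1 : k ≠ i' := Finset.ne_of_mem_erase hk
      have h2 : k ≠ i := Finset.ne_of_mem_erase (Finset.mem_of_mem_erase hk)
      simp [hh, h1, h2])]
    simp [hh, hii, Ne.symm hii, mul_assoc]
  have e2 : (∏ k, ∫ a, h k a ∂μ) = (∫ a, f a ∂μ) * ∫ a, g a ∂μ := by
    rw [← Finset.mul_prod_erase Finset.univ _ (Finset.mem_univ i),
        ← Finset.mul_prod_erase _ _
          (Finset.mem_erase.mpr ⟨Ne.symm hii, Finset.mem_univ i'⟩)]
    rw [Finset.prod_eq_one (fun k hk => by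
      have h1 : k ≠ i' := Finset.ne_of_mem_erase hk
      have h2 : k ≠ i := Finset.ne_of_mem_erase (Finset.mem_of_mem_erase hk)
      simp [hh, h1, h2])]
    simp [hh, hii, Ne.symm hii, mul_assoc]
  rw [← e2, ← aux_pi_prod μ h]
  exact integral_congr_ae (Filter.Eventually.of_forall fun x => (e1 x).symm)

lemma aux_integrable {α : Type*} [MeasurableSpace α] {μ : Measure α} [IsFiniteMeasure μ]
    {f : α → ℝ} (hf : AEStronglyMeasurable f μ) {C : ℝ} (h : ∀ x, |f x| ≤ C) :
    Integrable f μ :=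
  (integrable_const C).mono' hf (Filter.Eventually.of_forall fun x => by
    simpa [Real.norm_eq_abs] using h x)

theorem stmt8
    {Ω : Type*} [MeasurableSpace Ω] (P : Measure Ω) [IsProbabilityMeasure P]
    {S₁ S₂ : Type*} [MeasurableSpace S₁] [MeasurableSpace S₂]
    (μ₁ : Measure S₁) (μ₂ : Measure S₂)
    [IsProbabilityMeasure μ₁] [IsProbabilityMeasure μ₂] :
    ∃ C : ℝ, ∀ N : ℕ, 0 < N →
      ∀ (X₁ : Fin N → Ω → S₁) (X₂ : Fin N → Ω → S₂),
      (∀ n, Measurable (X₁ n)) → (∀ n, Measurable (X₂ n)) →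
      Measure.map (fun ω => ((fun n => X₁ n ω), (fun n => X₂ n ω))) P
        = (Measure.pi fun _ : Fin N => μ₁).prod (Measure.pi fun _ : Fin N => μ₂) →
      ∀ φ : S₁ × S₂ → ℝ, Measurable φ → ∀ M : ℝ, (∀ x, |φ x| ≤ M) →
      (∫ ω, (((N : ℝ)^2)⁻¹ * (∑ i : Fin N, ∑ j : Fin N, φ (X₁ i ω, X₂ j ω))
          - (N : ℝ)⁻¹ * (∑ i : Fin N, ∫ y, φ (X₁ i ω, y) ∂μ₂)
          - (N : ℝ)⁻¹ * (∑ j : Fin N, ∫ x, φ (x, X₂ j ω) ∂μ₁)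
          + ∫ x, ∫ y, φ (x, y) ∂μ₂ ∂μ₁) ^ 2 ∂P) ^ ((1 : ℝ) / 2)
        ≤ C * M / N := by
  refine ⟨4, fun N hN X₁ X₂ hX₁ hX₂ hmap φ hφ M hM => ?_⟩
  have hNR : (0:ℝ) < N := by exact_mod_cast hN
  -- nonemptiness and M ≥ 0
  have hne₁ : Nonempty S₁ := by
    by_contra h
    rw [not_nonempty_iff] at h
    have h1 : (μ₁ : Measure S₁) Set.univ = 1 := measure_univ
    rw [Set.univ_eq_empty_iff.mpr h, measure_empty] at h1
    exact one_ne_zero h1.symm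
  have hne₂ : Nonempty S₂ := by
    by_contra h
    rw [not_nonempty_iff] at h
    have h1 : (μ₂ : Measure S₂) Set.univ = 1 := measure_univ
    rw [Set.univ_eq_empty_iff.mpr h, measure_empty] at h1
    exact one_ne_zero h1.symm
  obtain ⟨a₀⟩ := hne₁
  obtain ⟨b₀⟩ := hne₂
  have hM0 : 0 ≤ M := le_trans (abs_nonneg _) (hM (a₀, b₀))
  -- definitions
  set g₂ : S₁ → ℝ := fun a => ∫ y, φ (a, y) ∂μ₂ with hg₂def
  set g₁ : S₂ → ℝ := fun b => ∫ x, φ (x, b) ∂μ₁ with hg₁def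
  set c : ℝ := ∫ x, ∫ y, φ (x, y) ∂μ₂ ∂μ₁ with hcdef
  set ψ : S₁ → S₂ → ℝ := fun a b => φ (a, b) - g₂ a - g₁ b + c with hψdef
  -- measurability
  have hφs : StronglyMeasurable φ := hφ.stronglyMeasurable
  have mg₂ : StronglyMeasurable g₂ := hφs.integral_prod_right'
  have mg₁ : StronglyMeasurable g₁ := hφs.integral_prod_left'
  have mψ : Measurable (fun p : S₁ × S₂ => ψ p.1 p.2) := by
    simp only [hψdef]
    exact (((hφ.comp (measurable_fst.prodMk measurable_snd)).sub
        (mg₂.measurable.comp measurable_fst)).sub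
        (mg₁.measurable.comp measurable_snd)).add measurable_const
  -- bounds
  have hg₂b : ∀ a, |g₂ a| ≤ M := by
    intro a
    have h := norm_integral_le_of_norm_le_const (μ := μ₂)
      (f := fun y => φ (a, y)) (C := M)
      (Filter.Eventually.of_forall fun y => by simpa [Real.norm_eq_abs] using hM (a, y))
    simpa [Real.norm_eq_abs, measure_univ] using h
  have hg₁b : ∀ b, |g₁ b| ≤ M := by
    intro b
    have h := norm_integral_le_of_norm_le_const (μ := μ₁)
      (f := fun x => φ (x, b)) (C := M)
      (Filter.Eventually.of_forall fun x => by simpa [Real.norm_eq_abs] using hM (x, b))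
    simpa [Real.norm_eq_abs, measure_univ] using h
  have hcb : |c| ≤ M := by
    have h := norm_integral_le_of_norm_le_const (μ := μ₁)
      (f := fun a => g₂ a) (C := M)
      (Filter.Eventually.of_forall fun a => by simpa [Real.norm_eq_abs] using hg₂b a)
    simpa [Real.norm_eq_abs, measure_univ, hcdef, hg₂def] using h
  have hψb : ∀ a b, |ψ a b| ≤ 4 * M := by
    intro a b
    have h1 := abs_le.mp (hM (a, b))
    have h2 := abs_le.mp (hg₂b a)
    have h3 := abs_le.mp (hg₁b b)
    have h4 := abs_le.mp hcb
    rw [hψdef, abs_le]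
    constructor <;> simp only <;> [linarith; linarith]
  -- integrability of φ on products
  have hφint : Integrable φ (μ₁.prod μ₂) := aux_integrable hφ.aestronglyMeasurable hM
  -- centering
  have hψ₁ : ∀ b, ∫ a, ψ a b ∂μ₁ = 0 := by
    intro b
    have i1 : Integrable (fun a => φ (a, b)) μ₁ :=
      aux_integrable (hφ.comp (measurable_id.prodMk measurable_const)).aestronglyMeasurable
        (fun a => hM (a, b))
    have i2 : Integrable g₂ μ₁ := aux_integrable mg₂.aestronglyMeasurable hg₂b
    have e : ∫ a, ψ a b ∂μ₁
        = (∫ a, φ (a, b) ∂μ₁) - (∫ a, g₂ a ∂μ₁) - g₁ b + c := by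
      simp only [hψdef]
      rw [integral_add (f := fun a => φ (a, b) - g₂ a - g₁ b) (g := fun _ => c)
            (by exact (i1.sub i2).sub (integrable_const _)) (integrable_const _),
          integral_sub (f := fun a => φ (a, b) - g₂ a) (g := fun _ => g₁ b)
            (by exact i1.sub i2) (integrable_const _),
          integral_sub (f := fun a => φ (a, b)) (g := fun a => g₂ a)
            i1 (by exact i2)]
      simp [measure_univ]
    rw [e]
    have e1 : ∫ a, φ (a, b) ∂μ₁ = g₁ b := rfl
    have e2 : ∫ a, g₂ a ∂μ₁ = c := rfl
    rw [e1, e2]; ring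
  have hswap : ∫ b, g₁ b ∂μ₂ = c := by
    rw [hcdef, hg₁def]
    exact (integral_integral_swap (f := fun a b => φ (a, b)) (by exact hφint)).symm
  have hψ₂ : ∀ a, ∫ b, ψ a b ∂μ₂ = 0 := by
    intro a
    have i1 : Integrable (fun b => φ (a, b)) μ₂ :=
      aux_integrable (hφ.comp (measurable_const.prodMk measurable_id)).aestronglyMeasurable
        (fun b => hM (a, b))
    have i2 : Integrable g₁ μ₂ := aux_integrable mg₁.aestronglyMeasurable hg₁b
    have e : ∫ b, ψ a b ∂μ₂
        = (∫ b, φ (a, b) ∂μ₂) - g₂ a - (∫ b, g₁ b ∂μ₂) + c := by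
      simp only [hψdef]
      rw [integral_add (f := fun b => φ (a, b) - g₂ a - g₁ b) (g := fun _ => c)
            (by exact (i1.sub (integrable_const _)).sub i2) (integrable_const _),
          integral_sub (f := fun b => φ (a, b) - g₂ a) (g := fun b => g₁ b)
            (by exact i1.sub (integrable_const _)) (by exact i2),
          integral_sub (f := fun b => φ (a, b)) (g := fun _ => g₂ a)
            i1 (integrable_const _)]
      simp [measure_univ]
    rw [e]
    have e1 : ∫ b, φ (a, b) ∂μ₂ = g₂ a := rfl
    rw [e1, hswap]; ring
  -- the product measure
  set π : Measure ((Fin N → S₁) × (Fin N → S₂)) :=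
    (Measure.pi fun _ : Fin N => μ₁).prod (Measure.pi fun _ : Fin N => μ₂) with hπdef
  have mvec : Measurable fun ω => ((fun n => X₁ n ω), (fun n => X₂ n ω)) :=
    (measurable_pi_lambda _ hX₁).prodMk (measurable_pi_lambda _ hX₂)
  set G : (Fin N → S₁) × (Fin N → S₂) → ℝ :=
    fun p => (((N : ℝ)^2)⁻¹ * ∑ i : Fin N, ∑ j : Fin N, ψ (p.1 i) (p.2 j))^2 with hGdef
  have hcoord : ∀ i j : Fin N,
      Measurable (fun p : (Fin N → S₁) × (Fin N → S₂) => ψ (p.1 i) (p.2 j)) := by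
    intro i j
    have hpair : Measurable (fun p : (Fin N → S₁) × (Fin N → S₂) => (p.1 i, p.2 j)) :=
      ((measurable_pi_apply i).comp measurable_fst).prodMk
        ((measurable_pi_apply j).comp measurable_snd)
    exact mψ.comp hpair
  have mterm : ∀ i i' j j' : Fin N,
      Measurable (fun p : (Fin N → S₁) × (Fin N → S₂) =>
        ψ (p.1 i) (p.2 j) * ψ (p.1 i') (p.2 j')) := by
    intro i i' j j'
    exact (hcoord i j).mul (hcoord i' j')
  have mG : Measurable G := by
    apply Measurable.pow_const
    apply Measurable.const_mul
    exact Finset.measurable_sum _ fun i _ => Finset.measurable_sum _ fun j _ => hcoord i j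
  have iterm : ∀ i i' j j' : Fin N,
      Integrable (fun p : (Fin N → S₁) × (Fin N → S₂) =>
        ψ (p.1 i) (p.2 j) * ψ (p.1 i') (p.2 j')) π := by
    intro i i' j j'
    refine aux_integrable (mterm i i' j j').aestronglyMeasurable (C := (4*M) * (4*M)) ?_
    intro p
    rw [abs_mul]
    exact mul_le_mul (hψb _ _) (hψb _ _) (abs_nonneg _) (by linarith)
  -- pointwise rewriting
  have key : ∀ ω,
      ((N : ℝ)^2)⁻¹ * (∑ i : Fin N, ∑ j : Fin N, φ (X₁ i ω, X₂ j ω))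
          - (N : ℝ)⁻¹ * (∑ i : Fin N, ∫ y, φ (X₁ i ω, y) ∂μ₂)
          - (N : ℝ)⁻¹ * (∑ j : Fin N, ∫ x, φ (x, X₂ j ω) ∂μ₁)
          + c
        = ((N : ℝ)^2)⁻¹ * ∑ i : Fin N, ∑ j : Fin N, ψ (X₁ i ω) (X₂ j ω) := by
    intro ω
    have e : ∑ i : Fin N, ∑ j : Fin N, ψ (X₁ i ω) (X₂ j ω)
        = (∑ i : Fin N, ∑ j : Fin N, φ (X₁ i ω, X₂ j ω))
          - (N:ℝ) * ∑ i : Fin N, g₂ (X₁ i ω)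
          - (N:ℝ) * ∑ j : Fin N, g₁ (X₂ j ω) + (N:ℝ)^2 * c := by
      simp only [hψdef, Finset.sum_add_distrib, Finset.sum_sub_distrib, Finset.sum_const,
        Finset.card_univ, Fintype.card_fin, nsmul_eq_mul, Finset.mul_sum]
      ring
    rw [e]
    have hg2e : ∀ i, g₂ (X₁ i ω) = ∫ y, φ (X₁ i ω, y) ∂μ₂ := fun _ => rfl
    have hg1e : ∀ j, g₁ (X₂ j ω) = ∫ x, φ (x, X₂ j ω) ∂μ₁ := fun _ => rfl
    simp only [hg2e, hg1e]
    field_simp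
  -- transfer to the product space
  have e4 : ∫ ω, (((N : ℝ)^2)⁻¹ * ∑ i : Fin N, ∑ j : Fin N, ψ (X₁ i ω) (X₂ j ω))^2 ∂P
      = ∫ p, G p ∂π := by
    rw [← hmap, integral_map mvec.aemeasurable mG.aestronglyMeasurable]
  -- expansion of the square
  set T : Fin N → Fin N → Fin N → Fin N → ℝ := fun i i' j j' =>
    ∫ p, ψ (p.1 i) (p.2 j) * ψ (p.1 i') (p.2 j') ∂π with hTdef
  have hG : ∫ p, G p ∂π
      = (((N:ℝ)^2)⁻¹)^2 * ∑ i : Fin N, ∑ i' : Fin N, ∑ j : Fin N, ∑ j' : Fin N, T i i' j j' := by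
    have expand : ∀ p : (Fin N → S₁) × (Fin N → S₂),
        G p = (((N:ℝ)^2)⁻¹)^2 * ∑ i : Fin N, ∑ i' : Fin N, ∑ j : Fin N, ∑ j' : Fin N,
          ψ (p.1 i) (p.2 j) * ψ (p.1 i') (p.2 j') := by
      intro p
      simp only [hGdef]
      rw [mul_pow]
      congr 1
      rw [sq, Finset.sum_mul_sum]
      refine Finset.sum_congr rfl fun i _ => Finset.sum_congr rfl fun i' _ => ?_
      rw [Finset.sum_mul_sum]
    calc ∫ p, G p ∂π
        = ∫ p, (((N:ℝ)^2)⁻¹)^2 * ∑ i : Fin N, ∑ i' : Fin N, ∑ j : Fin N, ∑ j' : Fin N,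
            ψ (p.1 i) (p.2 j) * ψ (p.1 i') (p.2 j') ∂π :=
          integral_congr_ae (Filter.Eventually.of_forall expand)
      _ = (((N:ℝ)^2)⁻¹)^2 * ∫ p, ∑ i : Fin N, ∑ i' : Fin N, ∑ j : Fin N, ∑ j' : Fin N,
            ψ (p.1 i) (p.2 j) * ψ (p.1 i') (p.2 j') ∂π := integral_const_mul _ _
      _ = (((N:ℝ)^2)⁻¹)^2 * ∑ i : Fin N, ∑ i' : Fin N, ∑ j : Fin N, ∑ j' : Fin N, T i i' j j' := by
          congr 1
          rw [integral_finset_sum _ (fun i _ => integrable_finset_sum _ fun i' _ =>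
            integrable_finset_sum _ fun j _ => integrable_finset_sum _ fun j' _ => iterm i i' j j')]
          refine Finset.sum_congr rfl fun i _ => ?_
          rw [integral_finset_sum _ (fun i' _ => integrable_finset_sum _ fun j _ =>
            integrable_finset_sum _ fun j' _ => iterm i i' j j')]
          refine Finset.sum_congr rfl fun i' _ => ?_
          rw [integral_finset_sum _ (fun j _ =>
            integrable_finset_sum _ fun j' _ => iterm i i' j j')]
          refine Finset.sum_congr rfl fun j _ => ?_
          rw [integral_finset_sum _ (fun j' _ => iterm i i' j j')]
  -- off-diagonal terms vanish
  have hT0 : ∀ i i' j j' : Fin N, i ≠ i' ∨ j ≠ j' → T i i' j j' = 0 := by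
    intro i i' j j' hcase
    rcases hcase with hii | hjj
    · rw [hTdef]
      simp only
      rw [hπdef, integral_prod_symm _ (by rw [← hπdef]; exact iterm i i' j j')]
      have hz : ∀ y : Fin N → S₂,
          ∫ x : Fin N → S₁, ψ (x i) (y j) * ψ (x i') (y j') ∂(Measure.pi fun _ => μ₁) = 0 := by
        intro y
        calc ∫ x : Fin N → S₁, ψ (x i) (y j) * ψ (x i') (y j') ∂(Measure.pi fun _ => μ₁)
            = (∫ a, ψ a (y j) ∂μ₁) * ∫ a, ψ a (y j') ∂μ₁ := by
              simpa using aux_pi_two μ₁ hii (fun a => ψ a (y j)) (fun a => ψ a (y j'))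
          _ = 0 := by rw [hψ₁, zero_mul]
      simp [hz]
    · rw [hTdef]
      simp only
      rw [hπdef, integral_prod _ (by rw [← hπdef]; exact iterm i i' j j')]
      have hz : ∀ x : Fin N → S₁,
          ∫ y : Fin N → S₂, ψ (x i) (y j) * ψ (x i') (y j') ∂(Measure.pi fun _ => μ₂) = 0 := by
        intro x
        calc ∫ y : Fin N → S₂, ψ (x i) (y j) * ψ (x i') (y j') ∂(Measure.pi fun _ => μ₂)
            = (∫ b, ψ (x i) b ∂μ₂) * ∫ b, ψ (x i') b ∂μ₂ := by
              simpa using aux_pi_two μ₂ hjj (fun b => ψ (x i) b) (fun b => ψ (x i') b)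
          _ = 0 := by rw [hψ₂, zero_mul]
      simp [hz]
  -- diagonal bound
  have hTdiag : ∀ i j : Fin N, T i i j j ≤ 16 * M^2 := by
    intro i j
    have hle : ∀ p : (Fin N → S₁) × (Fin N → S₂),
        ψ (p.1 i) (p.2 j) * ψ (p.1 i) (p.2 j) ≤ 16 * M^2 := by
      intro p
      have h := abs_le.mp (hψb (p.1 i) (p.2 j))
      nlinarith [h.1, h.2]
    calc T i i j j ≤ ∫ _p : (Fin N → S₁) × (Fin N → S₂), 16 * M^2 ∂π :=
        integral_mono (iterm i i j j) (integrable_const _) hle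
      _ = 16 * M^2 := by simp [measure_univ]
  -- sum bound
  have hsum : ∑ i : Fin N, ∑ i' : Fin N, ∑ j : Fin N, ∑ j' : Fin N, T i i' j j'
      ≤ (N:ℝ)^2 * (16 * M^2) := by
    have h1 : ∀ i : Fin N,
        ∑ i' : Fin N, ∑ j : Fin N, ∑ j' : Fin N, T i i' j j' = ∑ j : Fin N, T i i j j := by
      intro i
      rw [Finset.sum_eq_single i
        (fun i' _ hne => Finset.sum_eq_zero fun j _ => Finset.sum_eq_zero fun j' _ =>
          hT0 i i' j j' (Or.inl (Ne.symm hne)))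
        (fun h => absurd (Finset.mem_univ i) h)]
      refine Finset.sum_congr rfl fun j _ => ?_
      rw [Finset.sum_eq_single j
        (fun j' _ hne => hT0 i i j j' (Or.inr (Ne.symm hne)))
        (fun h => absurd (Finset.mem_univ j) h)]
    calc ∑ i : Fin N, ∑ i' : Fin N, ∑ j : Fin N, ∑ j' : Fin N, T i i' j j'
        = ∑ i : Fin N, ∑ j : Fin N, T i i j j := Finset.sum_congr rfl fun i _ => h1 i
      _ ≤ ∑ _i : Fin N, ∑ _j : Fin N, 16 * M^2 :=
          Finset.sum_le_sum fun i _ => Finset.sum_le_sum fun j _ => hTdiag i j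
      _ = (N:ℝ)^2 * (16 * M^2) := by
          simp [Finset.sum_const, Finset.card_univ]
          ring
  -- final bound on the integral
  have hGle : ∫ p, G p ∂π ≤ (4 * M / N)^2 := by
    rw [hG]
    calc (((N:ℝ)^2)⁻¹)^2 * ∑ i : Fin N, ∑ i' : Fin N, ∑ j : Fin N, ∑ j' : Fin N, T i i' j j'
        ≤ (((N:ℝ)^2)⁻¹)^2 * ((N:ℝ)^2 * (16 * M^2)) := by
          exact mul_le_mul_of_nonneg_left hsum (by positivity)
      _ = (4 * M / N)^2 := by field_simp; ring
  -- conclude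
  simp only [key]
  rw [e4]
  have h0 : (0:ℝ) ≤ ∫ p, G p ∂π := by
    rw [← e4]; exact integral_nonneg fun ω => sq_nonneg _
  have h4 : (0:ℝ) ≤ 4 * M / N := by positivity
  calc (∫ p, G p ∂π) ^ ((1:ℝ)/2) ≤ ((4 * M / N)^2) ^ ((1:ℝ)/2) :=
      Real.rpow_le_rpow h0 hGle (by norm_num)
    _ = 4 * M / N := by
        rw [← Real.sqrt_eq_rpow]
        exact Real.sqrt_sq h4
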